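/- Let T be a κ-Aronszajn tree with the fine wedge topology. Then every cover of T by subbasic open sets (sets of the form ↑t or (↑t)^c) has a subcover of cardinality less than κ. -/

import Mathlib

universe u

/-- A partial order is a tree if the set of strict predecessors of every point
is well-ordered by `<`. -/
def IsTree (T : Type u) [PartialOrder T] : Prop :=
  ∀ x : T, IsWellOrder {y : T // y < x} (fun a b => (a : T) < (b : T))

/-- The height of a node of a tree: the order type of its set of strict predecessors. -/
noncomputable def nodeHeight {T : Type u} [PartialOrder T] (hT : IsTree T) (x : T) :
    Ordinal.{u} :=
  letI := hT x
  Ordinal.type (fun a b : {y : T // y < x} => (a : T) < (b : T))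

/-- A `κ`-tree: a tree of height `κ` all of whose levels have size `< κ`. -/
def IsKTree {T : Type u} [PartialOrder T] (hT : IsTree T) (κ : Cardinal.{u}) : Prop :=
  (∀ x : T, nodeHeight hT x < κ.ord) ∧
  (∀ o : Ordinal.{u}, o < κ.ord → ∃ x : T, nodeHeight hT x = o) ∧
  (∀ o : Ordinal.{u}, Cardinal.mk {x : T | nodeHeight hT x = o} < κ)

/-- The fine wedge topology on a tree: generated by the cones `↑t = Set.Ici t`
and their complements. -/
def fineWedge (T : Type u) [PartialOrder T] : TopologicalSpace T :=
  TopologicalSpace.generateFrom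
    ({s | ∃ t : T, s = Set.Ici t} ∪ {s | ∃ t : T, s = (Set.Ici t)ᶜ})

section Helpers

variable {T : Type u} [PartialOrder T] (hT : IsTree T)

include hT in
lemma comp_below {x y z : T} (hy : y ≤ x) (hz : z ≤ x) : y ≤ z ∨ z ≤ y := by
  rcases hy.lt_or_eq with hy' | heqy
  case inr => exact Or.inr (heqy ▸ hz)
  rcases hz.lt_or_eq with hz' | heqz
  case inr => exact Or.inl (heqz ▸ hy)
  · haveI := hT x
    rcases trichotomous_of (fun a b : {y : T // y < x} => (a : T) < (b : T)) ⟨y, hy'⟩ ⟨z, hz'⟩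
      with h | h | h
    · exact Or.inl h.le
    · exact Or.inl (le_of_eq (congrArg Subtype.val h))
    · exact Or.inr h.le

lemma nodeHeight_eq_typein {x y : T} (h : y < x) :
    letI := hT x
    nodeHeight hT y = Ordinal.typein (fun a b : {y : T // y < x} => (a : T) < (b : T)) ⟨y, h⟩ := by
  letI := hT x
  letI := hT y
  rw [← Ordinal.type_subrel]
  refine Ordinal.type_eq.2 ⟨?_⟩
  exact RelIso.mk
    (Equiv.mk (fun z => ⟨⟨z.1, lt_trans z.2 h⟩, z.2⟩) (fun b => ⟨b.1.1, b.2⟩)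
      (fun z => rfl) (fun b => rfl)) Iff.rfl

lemma nodeHeight_strictMono {x y : T} (h : y < x) : nodeHeight hT y < nodeHeight hT x := by
  letI := hT x
  rw [nodeHeight_eq_typein hT h]
  exact Ordinal.typein_lt_type _ _

lemma exists_height_lt {x : T} {β : Ordinal.{u}} (hβ : β < nodeHeight hT x) :
    ∃ y, y < x ∧ nodeHeight hT y = β := by
  letI := hT x
  obtain ⟨a, ha⟩ := Ordinal.typein_surj (fun a b : {y : T // y < x} => (a : T) < (b : T)) hβ
  exact ⟨a.1, a.2, by rw [nodeHeight_eq_typein hT a.2]; exact ha⟩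

/-- The set of points of height below `o < κ.ord` has size `< κ` when `κ` is regular
and all levels are small. -/
lemma mk_height_lt {κ : Cardinal.{u}} (hreg : κ.IsRegular)
    (hlev : ∀ o : Ordinal.{u}, Cardinal.mk {x : T | nodeHeight hT x = o} < κ)
    {o : Ordinal.{u}} (ho : o < κ.ord) :
    Cardinal.mk {x : T | nodeHeight hT x < o} < κ := by
  classical
  set g : {x : T | nodeHeight hT x < o} → o.ToType :=
    fun x => (Ordinal.ToType.mk (o := o)) ⟨nodeHeight hT x.1, x.2⟩ with hg
  have e : Cardinal.mk {x : T | nodeHeight hT x < o}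
      = Cardinal.sum (fun i : o.ToType => Cardinal.mk {x // g x = i}) := by
    rw [← Cardinal.mk_sigma]
    exact (Cardinal.mk_congr (Equiv.sigmaFiberEquiv g)).symm
  rw [e]
  apply Cardinal.sum_lt_of_isRegular hreg
  · rw [Cardinal.mk_toType]
    exact Cardinal.lt_ord.1 ho
  · intro i
    have key : ∀ x : {x // g x = i},
        nodeHeight hT x.1.1 = (((Ordinal.ToType.mk (o := o))).symm i).1 := by
      intro x
      have := congrArg ((Ordinal.ToType.mk (o := o))).symm x.2
      rw [OrderIso.symm_apply_apply] at this
      exact congrArg Subtype.val this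
    exact lt_of_le_of_lt (Cardinal.mk_le_of_injective
      (f := fun x : {x // g x = i} =>
        (⟨x.1.1, key x⟩ : {y : T | nodeHeight hT y = (((Ordinal.ToType.mk (o := o))).symm i).1}))
      (fun a b hab => by
        apply Subtype.ext; apply Subtype.ext
        simpa using hab)) (hlev _)

end Helpers

theorem stmt_16 (κ : Cardinal.{u}) (hκ : Cardinal.aleph0 < κ) (hreg : κ.IsRegular)
    (T : Type u) [PartialOrder T] (hT : IsTree T) (hK : IsKTree hT κ)
    -- `T` is Aronszajn: no cofinal branch
    (hA : ¬ ∃ b : Set T, IsChain (· ≤ ·) b ∧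
        (∀ c : Set T, IsChain (· ≤ ·) c → b ⊆ c → b = c) ∧
        (∀ o : Ordinal.{u}, o < κ.ord → ∃ x ∈ b, nodeHeight hT x = o)) :
    -- every cover by subbasic open sets has a subcover of size < κ
    ∀ 𝒰 : Set (Set T),
      (∀ U ∈ 𝒰, (∃ t : T, U = Set.Ici t) ∨ (∃ t : T, U = (Set.Ici t)ᶜ)) →
      ⋃₀ 𝒰 = Set.univ →
      ∃ 𝒰₀ ⊆ 𝒰, Cardinal.mk 𝒰₀ < κ ∧ ⋃₀ 𝒰₀ = Set.univ := by
  classical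
  intro 𝒰 hsub hcov
  set B : Set T := {b | (Set.Ici b)ᶜ ∈ 𝒰} with hB
  by_cases hch : IsChain (· ≤ ·) B
  · -- B is a chain
    by_cases hbd : ∃ o < κ.ord, ∀ b ∈ B, nodeHeight hT b < o
    · -- heights of B are bounded by o
      obtain ⟨o, ho, hBo⟩ := hbd
      set U : Set T := {x | ∀ b ∈ B, b ≤ x} with hU
      set M : Set T := {m | m ∈ U ∧ ∀ z ∈ U, ¬ z < m} with hM
      -- every point of U is above a minimal point of U
      have hminex : ∀ x ∈ U, ∃ m ∈ M, m ≤ x := by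
        intro x hx
        by_cases hex : ∃ y : {y : T // y < x}, y.1 ∈ U
        · haveI := hT x
          have hwf : WellFounded (fun a b : {y : T // y < x} => (a : T) < (b : T)) :=
            IsWellFounded.wf
          set S : Set {y : T // y < x} := {y | y.1 ∈ U} with hS
          have hSne : S.Nonempty := hex
          refine ⟨(hwf.min S hSne).1, ⟨hwf.min_mem S hSne, ?_⟩, (hwf.min S hSne).2.le⟩
          intro z hz hlt
          have hzx : z < x := lt_trans hlt (hwf.min S hSne).2
          exact hwf.not_lt_min S (x := ⟨z, hzx⟩) hz hlt
        · refine ⟨x, ⟨hx, ?_⟩, le_rfl⟩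
          intro z hz hlt
          exact hex ⟨⟨z, hlt⟩, hz⟩
      -- minimal points of U have height ≤ o
      have hMh : ∀ m ∈ M, nodeHeight hT m < o + 1 := by
        intro m hm
        by_contra hlt
        have hom : o < nodeHeight hT m := by
          have : o + 1 ≤ nodeHeight hT m := not_lt.1 hlt
          exact lt_of_lt_of_le (by rw [Ordinal.add_one_eq_succ]; exact Order.lt_succ o) this
        obtain ⟨y, hyx, hyo⟩ := exists_height_lt hT hom
        have hyU : y ∈ U := by
          intro b hb
          have hbm : b ≤ m := hm.1 b hb
          have hbo : nodeHeight hT b < o := hBo b hb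
          rcases comp_below hT hbm hyx.le with h | h
          · exact h
          · exfalso
            rcases h.lt_or_eq with h' | h'
            · have := nodeHeight_strictMono hT h'
              rw [hyo] at this
              exact absurd hbo (not_lt.2 this.le)
            · rw [← h', hyo] at hbo
              exact lt_irrefl o hbo
        exact hm.2 y hyU hyx
      -- pick a cone from the cover above each minimal point
      have hpick : ∀ m ∈ M, ∃ V ∈ 𝒰, Set.Ici m ⊆ V := by
        intro m hm
        have : m ∈ ⋃₀ 𝒰 := by rw [hcov]; trivial
        obtain ⟨V, hV, hmV⟩ := this
        rcases hsub V hV with ⟨a, rfl⟩ | ⟨b, rfl⟩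
        · exact ⟨Set.Ici a, hV, fun x hx => le_trans hmV hx⟩
        · exact absurd (hm.1 b hV) hmV
      choose! V hV𝒰 hVsub using hpick
      refine ⟨((fun b => (Set.Ici b)ᶜ) '' B) ∪ (V '' M), ?_, ?_, ?_⟩
      · rintro W (⟨b, hb, rfl⟩ | ⟨m, hm, rfl⟩)
        · exact hb
        · exact hV𝒰 m hm
      · refine lt_of_le_of_lt (Cardinal.mk_union_le _ _) ?_
        apply Cardinal.add_lt_of_lt hreg.1
        · refine lt_of_le_of_lt (Cardinal.mk_image_le) ?_
          refine lt_of_le_of_lt (Cardinal.mk_le_mk_of_subset (t := {x : T | nodeHeight hT x < o})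
            (fun b hb => hBo b hb)) ?_
          exact mk_height_lt hT hreg hK.2.2 ho
        · refine lt_of_le_of_lt (Cardinal.mk_image_le) ?_
          refine lt_of_le_of_lt (Cardinal.mk_le_mk_of_subset
            (t := {x : T | nodeHeight hT x < o + 1}) (fun m hm => hMh m hm)) ?_
          refine mk_height_lt hT hreg hK.2.2 ?_
          rw [Ordinal.add_one_eq_succ]
          exact (Cardinal.isSuccLimit_ord hreg.1).succ_lt ho
      · apply Set.eq_univ_of_forall
        intro x
        by_cases hxU : x ∈ U
        · obtain ⟨m, hm, hmx⟩ := hminex x hxU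
          exact ⟨V m, Or.inr ⟨m, hm, rfl⟩, hVsub m hm hmx⟩
        · have : ∃ b ∈ B, ¬ b ≤ x := by
            by_contra h
            push_neg at h
            exact hxU h
          obtain ⟨b, hb, hbx⟩ := this
          exact ⟨(Set.Ici b)ᶜ, Or.inl ⟨b, hb, rfl⟩, hbx⟩
    · -- heights of B are unbounded: build a cofinal branch, contradiction
      exfalso
      push_neg at hbd
      set C : Set T := {y | ∃ b ∈ B, y ≤ b} with hC
      have hchC : IsChain (· ≤ ·) C := by
        rintro y ⟨b₁, hb₁, hyb₁⟩ z ⟨b₂, hb₂, hzb₂⟩ _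
        rcases eq_or_ne b₁ b₂ with rfl | hne
        · exact comp_below hT hyb₁ hzb₂
        · rcases hch hb₁ hb₂ hne with h | h
          · exact comp_below hT (le_trans hyb₁ h) hzb₂
          · exact comp_below hT hyb₁ (le_trans hzb₂ h)
      obtain ⟨Mx, hMx, hCMx⟩ := hchC.exists_maxChain
      apply hA
      refine ⟨Mx, hMx.1, fun c hc hsc => hMx.2 hc hsc, ?_⟩
      intro o ho
      obtain ⟨b, hbB, hob⟩ := hbd o ho
      rcases hob.lt_or_eq with h | h
      · obtain ⟨y, hyb, hyo⟩ := exists_height_lt hT h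
        exact ⟨y, hCMx ⟨b, hbB, hyb.le⟩, hyo⟩
      · exact ⟨b, hCMx ⟨b, hbB, le_rfl⟩, h.symm⟩
  · -- B is not a chain: two incomparable elements suffice
    have : ∃ b₁ ∈ B, ∃ b₂ ∈ B, ¬ (b₁ ≤ b₂ ∨ b₂ ≤ b₁) := by
      by_contra h
      push_neg at h
      exact hch fun a ha b hb _ => h a ha b hb
    obtain ⟨b₁, hb₁, b₂, hb₂, hnc⟩ := this
    refine ⟨{(Set.Ici b₁)ᶜ, (Set.Ici b₂)ᶜ}, ?_, ?_, ?_⟩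
    · rintro W (rfl | rfl)
      · exact hb₁
      · exact hb₂
    · exact lt_trans (((Set.finite_singleton _).insert _).lt_aleph0) hκ
    · apply Set.eq_univ_of_forall
      intro x
      rw [Set.sUnion_pair]
      by_contra h
      simp only [Set.mem_union, Set.mem_compl_iff, Set.mem_Ici, not_or, not_not] at h
      exact hnc (comp_below hT h.1 h.2)
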